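/- For P(x) = x^{2k+1}, ∫₀^∞ R(L₁,L₂,x) x^{2k+1} dx = (1/2)F_{2k+1}(L₁+L₂) + (1/2)F_{2k+1}(L₁−L₂) = (2k+1)! Σ_{m=0}^{k} Σ_{i+j=2m+1, j even} (L₁^i L₂^j/(i! j!)) · a_{k−m}/((2k−2m)!), where R(x,y,z) = (1/2)H(x+y,z) + (1/2)H(x−y,z) and F_{2k+1}(t) = Σ_{m=0}^k t^{2m+1} C(2k+1,2m+1) a_{k−m}. -/

import Mathlib

open Real MeasureTheory

/-- The kernel `H(x,y) = (1/(4π))(1/cosh((x−y)/4) − 1/cosh((x+y)/4))`. -/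
noncomputable def Hker (x y : ℝ) : ℝ :=
  (1 / (4 * Real.pi)) *
    (1 / Real.cosh ((x - y) / 4) - 1 / Real.cosh ((x + y) / 4))

/-- The kernel `R(x,y,z) = (1/2)H(x+y,z) + (1/2)H(x−y,z)`. -/
noncomputable def Rker (x y z : ℝ) : ℝ :=
  (1 / 2) * Hker (x + y) z + (1 / 2) * Hker (x - y) z

/-- The Taylor coefficients `a_n` of `1/cos(2πz) = Σ a_n z^{2n}/(2n)!`. -/
noncomputable def secCoeff (n : ℕ) : ℝ :=
  iteratedDeriv (2 * n) (fun x : ℝ => (Real.cos (2 * Real.pi * x))⁻¹) 0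

/-- The polynomial `F_{2k+1}(t) = Σ_{m=0}^k t^{2m+1} C(2k+1,2m+1) a_{k−m}`. -/
noncomputable def Fpoly (k : ℕ) (t : ℝ) : ℝ :=
  ∑ m ∈ Finset.range (k + 1),
    t ^ (2 * m + 1) * (Nat.choose (2 * k + 1) (2 * m + 1) : ℝ) * secCoeff (k - m)

open Set Filter

lemma inv_cosh_le (x : ℝ) : (Real.cosh x)⁻¹ ≤ 2 * Real.exp (-|x|) := by
  have h1 : Real.exp |x| ≤ 2 * Real.cosh x := by
    rw [Real.cosh_eq]
    rcases abs_cases x with ⟨h, _⟩ | ⟨h, _⟩ <;> rw [h] <;>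
      nlinarith [Real.exp_pos x, Real.exp_pos (-x)]
  have hc : 0 < Real.cosh x := Real.cosh_pos x
  rw [Real.exp_neg]
  have h2 : 0 < Real.exp |x| := Real.exp_pos _
  rw [inv_le_iff_one_le_mul₀ hc]
  have h3 : (Real.exp |x|)⁻¹ * Real.exp |x| = 1 := inv_mul_cancel₀ h2.ne'
  nlinarith [mul_le_mul_of_nonneg_left h1 (inv_pos.mpr h2).le]

lemma integrable_pow_exp (n : ℕ) {a : ℝ} (ha : 0 < a) :
    Integrable (fun x : ℝ => |x| ^ n * Real.exp (-(a * |x|))) := by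
  have hcont : Continuous (fun x : ℝ => |x| ^ n * Real.exp (-(a * |x|))) := by
    continuity
  apply hcont.locallyIntegrable.integrable_of_isBigO_atTop_of_norm_isNegInvariant
    (g := fun x => Real.exp (-(a/2) * x))
  · filter_upwards [] with x
    simp [abs_neg]
  · have h1 : (fun x : ℝ => x ^ n) =o[atTop] fun x => Real.exp ((a/2) * x) :=
      isLittleO_pow_exp_pos_mul_atTop n (by positivity)
    have h2 : (fun x : ℝ => x ^ n * Real.exp (-(a * x))) =o[atTop]
        fun x => Real.exp ((a/2) * x) * Real.exp (-(a*x)) :=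
      h1.mul_isBigO (Asymptotics.isBigO_refl _ _)
    have h3 : (fun x : ℝ => x ^ n * Real.exp (-(a * x))) =o[atTop]
        fun x => Real.exp (-(a/2) * x) := by
      convert h2 using 2 with x
      rw [← Real.exp_add]; ring_nf
    refine (h3.isBigO.congr' ?_ (EventuallyEq.refl _ _))
    filter_upwards [eventually_ge_atTop (0:ℝ)] with x hx
    rw [abs_of_nonneg hx]
  · exact ⟨Ioi 0, Ioi_mem_atTop 0, exp_neg_integrableOn_Ioi 0 (by positivity)⟩

lemma integrable_ker (n : ℕ) {c : ℝ} (hc : c < 4⁻¹) :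
    Integrable (fun u : ℝ => |u| ^ n * Real.exp (c * |u|) / Real.cosh (u / 4)) := by
  have ha : 0 < 4⁻¹ - c := by linarith
  refine ((integrable_pow_exp n ha).const_mul 2).mono' (by
    apply Continuous.aestronglyMeasurable
    exact (((continuous_abs.pow n).mul ((continuous_const.mul continuous_abs).rexp)).div
      (Real.continuous_cosh.comp (continuous_id.div_const 4)) (fun u => (Real.cosh_pos _).ne'))) ?_
  filter_upwards [] with u
  have hb := inv_cosh_le (u/4)
  have h4 : |u/4| = |u|/4 := by rw [abs_div]; norm_num
  have hc0 : (0:ℝ) < Real.cosh (u/4) := Real.cosh_pos _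
  have hexp : Real.exp (c * |u|) * (Real.cosh (u/4))⁻¹ ≤
      Real.exp (c * |u|) * (2 * Real.exp (-(|u|/4))) := by
    apply mul_le_mul_of_nonneg_left _ (Real.exp_pos _).le
    rwa [h4] at hb
  have : |u| ^ n * Real.exp (c * |u|) / Real.cosh (u/4) ≤
      2 * (|u| ^ n * Real.exp (-((4⁻¹ - c) * |u|))) := by
    rw [div_eq_mul_inv, mul_assoc]
    calc |u| ^ n * (Real.exp (c * |u|) * (Real.cosh (u/4))⁻¹)
        ≤ |u| ^ n * (Real.exp (c * |u|) * (2 * Real.exp (-(|u|/4)))) := by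
          apply mul_le_mul_of_nonneg_left hexp (by positivity)
      _ = 2 * (|u| ^ n * Real.exp (-((4⁻¹ - c) * |u|))) := by
          rw [show Real.exp (c*|u|) * (2 * Real.exp (-(|u|/4))) = 2 * (Real.exp (c*|u|) * Real.exp (-(|u|/4))) by ring, ← Real.exp_add]
          ring_nf
  rw [norm_of_nonneg (by positivity)]
  simpa using this

lemma J_eval {a : ℝ} (h0 : 0 < a) (h1 : a < 1) :
    ∫ t in Ioi (0:ℝ), t ^ (a - 1) / (1 + t) = π / Real.sin (π * a) := by
  have hsin : Real.sin (π * a) ≠ 0 := by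
    apply ne_of_gt
    apply Real.sin_pos_of_pos_of_lt_pi (by positivity)
    calc π * a < π * 1 := by
          exact mul_lt_mul_of_pos_left h1 Real.pi_pos
      _ = π := mul_one π
  -- complex beta value
  have hbeta : Complex.betaIntegral a (1 - a) = ↑π / Complex.sin (↑π * ↑a) := by
    have h := Complex.Gamma_mul_Gamma_eq_betaIntegral (s := (a:ℂ)) (t := 1 - (a:ℂ))
      (by simpa using h0) (by simp [Complex.sub_re]; linarith)
    rw [add_sub_cancel, Complex.Gamma_one, one_mul] at h
    rw [← h, Complex.Gamma_mul_Gamma_one_sub]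
  -- real version
  have hreal : (∫ x in (0:ℝ)..1, x ^ (a-1) * (1-x) ^ (-a)) = π / Real.sin (π * a) := by
    have hco : ((∫ x in (0:ℝ)..1, x ^ (a-1) * (1-x) ^ (-a) : ℝ) : ℂ)
        = Complex.betaIntegral a (1 - a) := by
      rw [← intervalIntegral.integral_ofReal, Complex.betaIntegral]
      apply intervalIntegral.integral_congr
      intro x hx
      rw [uIcc_of_le zero_le_one] at hx
      push_cast
      rw [Complex.ofReal_cpow hx.1, Complex.ofReal_cpow (by linarith [hx.2] : (0:ℝ) ≤ 1 - x)]
      push_cast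
      norm_num
    have := hco.trans hbeta
    rw [show (↑π / Complex.sin (↑π * ↑a) : ℂ) = ((π / Real.sin (π * a) : ℝ) : ℂ) by
      push_cast [Complex.ofReal_sin]; norm_num] at this
    exact_mod_cast this
  rw [← hreal, intervalIntegral.integral_of_le zero_le_one,
    MeasureTheory.integral_Ioc_eq_integral_Ioo]
  -- substitution x = t/(1+t)
  have himg : (fun t : ℝ => t / (1+t)) '' Ioi 0 = Ioo 0 1 := by
    ext x
    constructor
    · rintro ⟨t, ht, rfl⟩
      have ht' : (0:ℝ) < t := ht
      have hp : (0:ℝ) < 1 + t := by linarith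
      refine ⟨by positivity, ?_⟩
      rw [div_lt_one hp]; linarith
    · rintro ⟨hx0, hx1⟩
      refine ⟨x / (1-x), mem_Ioi.mpr (div_pos hx0 (by linarith)), ?_⟩
      have hx : (1:ℝ) - x ≠ 0 := by linarith
      field_simp
      ring
  have hderiv : ∀ t ∈ Ioi (0:ℝ),
      HasDerivWithinAt (fun t : ℝ => t / (1+t)) (((1+t)^2)⁻¹) (Ioi 0) t := by
    intro t ht
    have ht' : (0:ℝ) < t := ht
    have hp : (1:ℝ) + t ≠ 0 := by linarith
    have := (hasDerivAt_id t).div ((hasDerivAt_id t).const_add 1) hp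
    simp only [id_eq, one_mul, mul_one] at this
    rw [show (1+t-t)/(1+t)^2 = ((1+t)^2)⁻¹ by ring] at this
    exact this.hasDerivWithinAt
  have hinj : InjOn (fun t : ℝ => t / (1+t)) (Ioi 0) := by
    intro s hs t ht h
    have hs' : (0:ℝ) < s := hs
    have ht' : (0:ℝ) < t := ht
    have h1s : (1:ℝ) + s ≠ 0 := by linarith
    have h1t : (1:ℝ) + t ≠ 0 := by linarith
    field_simp at h
    linarith
  have key := integral_image_eq_integral_abs_deriv_smul measurableSet_Ioi hderiv hinj
    (fun x : ℝ => x ^ (a-1) * (1-x) ^ (-a))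
  rw [himg] at key
  rw [key]
  apply setIntegral_congr_fun measurableSet_Ioi
  intro t ht
  have ht' : (0:ℝ) < t := ht
  have hp : (0:ℝ) < 1 + t := by linarith
  have h1 : (1:ℝ) - t/(1+t) = (1+t)⁻¹ := by field_simp; ring
  simp only []
  rw [smul_eq_mul, h1, Real.inv_rpow hp.le, ← Real.rpow_neg hp.le, neg_neg,
    Real.div_rpow ht'.le hp.le, abs_of_nonneg (by positivity : (0:ℝ) ≤ ((1+t)^2)⁻¹)]
  have h2 : ((1+t):ℝ)^(a-1) * (1+t) = (1+t)^a := by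
    nth_rewrite 2 [← Real.rpow_one (1+t)]
    rw [← Real.rpow_add hp]; ring_nf
  rw [← h2]
  have h3 : ((1+t):ℝ)^(a-1) ≠ 0 := (Real.rpow_pos_of_pos hp (a-1)).ne'
  field_simp

lemma integral_exp_sech {b : ℝ} (hb : |b| < 1) :
    ∫ u : ℝ, Real.exp (b * u) / Real.cosh u = π / Real.cos (π * b / 2) := by
  obtain ⟨hb1, hb2⟩ := abs_lt.mp hb
  set c : ℝ := (b+1)/2 with hc
  have hc0 : 0 < c := by rw [hc]; linarith
  have hc1 : c < 1 := by rw [hc]; linarith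
  have step1 : (fun u : ℝ => Real.exp (b * u) / Real.cosh u)
      = fun u => 2 * ((fun v => Real.exp (c * v) / (1 + Real.exp v)) (2 * u)) := by
    funext u
    simp only [Real.cosh_eq]
    have he : Real.exp (-u) ≠ 0 := (Real.exp_pos _).ne'
    have h2 : (0:ℝ) < 1 + Real.exp (2*u) := by positivity
    have e1 : Real.exp (c * (2*u)) = Real.exp (b*u) * Real.exp u := by
      rw [← Real.exp_add]; congr 1; rw [hc]; ring
    have e2 : Real.exp (2*u) = Real.exp u * Real.exp u := by
      rw [← Real.exp_add]; congr 1; ring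
    have e3 : Real.exp u * Real.exp (-u) = 1 := by
      rw [← Real.exp_add]; simp
    have h3 : (0:ℝ) < Real.exp u + Real.exp (-u) := by positivity
    have e4 : Real.exp (b*u) * (Real.exp u * Real.exp (-u)) = Real.exp (b*u) := by rw [e3, mul_one]
    rw [e1, e2]
    field_simp
    nlinarith [Real.exp_pos u, Real.exp_pos (-u), Real.exp_pos (b*u), e4]
  rw [step1, MeasureTheory.integral_const_mul,
    MeasureTheory.Measure.integral_comp_mul_left (fun v => Real.exp (c * v) / (1 + Real.exp v)) 2]
  have habs : |(2:ℝ)⁻¹| = 2⁻¹ := by norm_num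
  rw [habs, smul_eq_mul, ← mul_assoc]
  norm_num
  -- now ∫ v, exp (c v)/(1+exp v) = J(c)
  have sub2 : ∫ t in Ioi (0:ℝ), t ^ (c - 1) / (1 + t)
      = ∫ v : ℝ, Real.exp (c * v) / (1 + Real.exp v) := by
    have hderiv : ∀ x ∈ (univ : Set ℝ),
        HasDerivWithinAt Real.exp (Real.exp x) univ x :=
      fun x _ => (Real.hasDerivAt_exp x).hasDerivWithinAt
    have hinj : InjOn Real.exp (univ : Set ℝ) := Real.exp_injective.injOn
    have key := integral_image_eq_integral_abs_deriv_smul MeasurableSet.univ hderiv hinj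
      (fun t : ℝ => t ^ (c-1) / (1 + t))
    rw [Set.image_univ, Real.range_exp] at key
    rw [key, MeasureTheory.Measure.restrict_univ]
    apply integral_congr_ae
    filter_upwards [] with x
    show |Real.exp x| • (Real.exp x ^ (c-1) / (1 + Real.exp x)) = _
    rw [smul_eq_mul, abs_of_pos (Real.exp_pos x),
      Real.rpow_def_of_pos (Real.exp_pos x), Real.log_exp]
    rw [mul_div_assoc', ← Real.exp_add]
    congr 2
    ring
  rw [← sub2, J_eval hc0 hc1]
  have : π * c = π * b / 2 + π / 2 := by rw [hc]; ring
  rw [this, Real.sin_add_pi_div_two]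

lemma sec_eval {s : ℝ} (hs : |s| < 4⁻¹) :
    (1/(4*π)) * ∫ u : ℝ, Real.exp (s * u) / Real.cosh (u / 4) = (Real.cos (2*π*s))⁻¹ := by
  have h1 : (fun u : ℝ => Real.exp (s * u) / Real.cosh (u / 4))
      = fun u => (fun v => Real.exp ((4*s) * v) / Real.cosh v) (u / 4) := by
    funext u; simp only []; congr 2; ring
  rw [h1, MeasureTheory.Measure.integral_comp_div (fun v => Real.exp ((4*s) * v) / Real.cosh v) 4]
  have hb : |4*s| < 1 := by rw [abs_mul]; rw [abs_of_nonneg (by norm_num : (0:ℝ) ≤ 4)]; linarith [hs]; 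
  rw [integral_exp_sech hb, smul_eq_mul]
  have : π * (4*s) / 2 = 2*π*s := by ring
  rw [this]
  rw [abs_of_nonneg (by norm_num : (0:ℝ) ≤ 4)]
  rw [div_eq_mul_inv π]
  field_simp [Real.pi_ne_zero]

noncomputable def mom (n : ℕ) (s : ℝ) : ℝ :=
  (1/(4*π)) * ∫ u : ℝ, u ^ n * Real.exp (s * u) / Real.cosh (u / 4)

lemma aesm_ker (n : ℕ) (s : ℝ) :
    AEStronglyMeasurable (fun u : ℝ => u ^ n * Real.exp (s * u) / Real.cosh (u / 4)) volume := by
  apply Continuous.aestronglyMeasurable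
  exact ((continuous_pow n).mul ((continuous_const.mul continuous_id).rexp)).div
    (Real.continuous_cosh.comp (continuous_id.div_const 4)) (fun u => (Real.cosh_pos _).ne')

lemma ker_abs_bound (n : ℕ) {s c : ℝ} (hsc : |s| ≤ c) (u : ℝ) :
    ‖u ^ n * Real.exp (s * u) / Real.cosh (u / 4)‖
      ≤ |u| ^ n * Real.exp (c * |u|) / Real.cosh (u / 4) := by
  have hc0 : (0:ℝ) < Real.cosh (u/4) := Real.cosh_pos _
  rw [Real.norm_eq_abs, abs_div, abs_of_pos hc0, abs_mul, abs_pow, Real.abs_exp]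
  apply div_le_div_of_nonneg_right _ hc0.le
  apply mul_le_mul_of_nonneg_left _ (by positivity)
  apply Real.exp_le_exp.mpr
  calc s * u ≤ |s * u| := le_abs_self _
    _ = |s| * |u| := abs_mul s u
    _ ≤ c * |u| := mul_le_mul_of_nonneg_right hsc (abs_nonneg u)

lemma integrable_mom (n : ℕ) {s : ℝ} (hs : |s| < 4⁻¹) :
    Integrable (fun u : ℝ => u ^ n * Real.exp (s * u) / Real.cosh (u / 4)) :=
  (integrable_ker n hs).mono' (aesm_ker n s)
    (Filter.Eventually.of_forall (ker_abs_bound n le_rfl))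

lemma hasDerivAt_mom (n : ℕ) {s : ℝ} (hs : |s| < 4⁻¹) :
    HasDerivAt (mom n) (mom (n+1) s) s := by
  set ε : ℝ := (4⁻¹ - |s|)/2 with hε
  have hε0 : 0 < ε := by rw [hε]; linarith
  set c : ℝ := |s| + ε with hcdef
  have hc4 : c < 4⁻¹ := by rw [hcdef, hε]; linarith
  have key := (hasDerivAt_integral_of_dominated_loc_of_deriv_le (μ := volume)
    (F := fun x u => u ^ n * Real.exp (x * u) / Real.cosh (u / 4))
    (F' := fun x u => u ^ (n+1) * Real.exp (x * u) / Real.cosh (u / 4))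
    (bound := fun u => |u| ^ (n+1) * Real.exp (c * |u|) / Real.cosh (u / 4))
    (x₀ := s) (Metric.ball_mem_nhds s hε0)
    (Filter.Eventually.of_forall (fun x => aesm_ker n x))
    (integrable_mom n hs)
    (aesm_ker (n+1) s)
    ?_ (integrable_ker (n+1) hc4) ?_).2
  · unfold mom
    exact key.const_mul _
  · filter_upwards [] with u x hx
    apply ker_abs_bound
    have h2 := mem_ball_iff_norm.mp hx
    rw [Real.norm_eq_abs] at h2
    have h3 := abs_sub_abs_le_abs_sub x s
    rw [hcdef]
    linarith
  · filter_upwards [] with u x hx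
    have h1 : HasDerivAt (fun x : ℝ => Real.exp (x * u)) (Real.exp (x * u) * u) x :=
      (hasDerivAt_mul_const u).exp
    have h2 := (h1.const_mul ((u:ℝ) ^ n)).div_const (Real.cosh (u/4))
    rw [show u ^ (n+1) * Real.exp (x * u) / Real.cosh (u/4)
        = u ^ n * (Real.exp (x * u) * u) / Real.cosh (u/4) by ring]
    exact h2

lemma iteratedDeriv_eq_mom (n : ℕ) : ∀ s : ℝ, |s| < 4⁻¹ →
    iteratedDeriv n (fun x : ℝ => (Real.cos (2 * π * x))⁻¹) s = mom n s := by
  induction n with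
  | zero =>
    intro s hs
    rw [iteratedDeriv_zero, ← sec_eval hs]
    unfold mom
    congr 1
    apply integral_congr_ae
    filter_upwards [] with u
    rw [pow_zero, one_mul]
  | succ n ih =>
    intro s hs
    rw [iteratedDeriv_succ]
    obtain ⟨hs1, hs2⟩ := abs_lt.mp hs
    have hopen : Ioo (-(4:ℝ)⁻¹) 4⁻¹ ∈ nhds s := (isOpen_Ioo).mem_nhds ⟨hs1, hs2⟩
    have heq : (iteratedDeriv n fun x : ℝ => (Real.cos (2 * π * x))⁻¹) =ᶠ[nhds s] mom n := by
      filter_upwards [hopen] with x hx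
      exact ih x (abs_lt.mpr ⟨hx.1, hx.2⟩)
    rw [heq.deriv_eq, (hasDerivAt_mom n hs).deriv]

lemma secCoeff_eq (n : ℕ) :
    (iteratedDeriv (2 * n) (fun x : ℝ => (Real.cos (2 * π * x))⁻¹) 0)
      = (1/(4*π)) * ∫ u : ℝ, u ^ (2*n) / Real.cosh (u / 4) := by
  rw [iteratedDeriv_eq_mom (2*n) 0 (by norm_num)]
  unfold mom
  congr 1
  apply integral_congr_ae
  filter_upwards [] with u
  rw [zero_mul, Real.exp_zero, mul_one]

lemma integrable_polysech (i : ℕ) : Integrable (fun u : ℝ => u ^ i / Real.cosh (u/4)) := by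
  have := integrable_mom i (s := 0) (by norm_num)
  simpa [Real.exp_zero] using this

lemma integrable_shift (n : ℕ) (t : ℝ) :
    Integrable (fun x : ℝ => x ^ n / Real.cosh ((x - t)/4)) := by
  apply ((integrable_pow_exp n (show (0:ℝ) < 4⁻¹ by norm_num)).const_mul
    (2 * Real.exp (|t|/4))).mono'
  · apply Continuous.aestronglyMeasurable
    exact (continuous_pow n).div
      (Real.continuous_cosh.comp ((continuous_id.sub continuous_const).div_const 4))
      (fun u => (Real.cosh_pos _).ne')
  · filter_upwards [] with x
    have hc0 : (0:ℝ) < Real.cosh ((x-t)/4) := Real.cosh_pos _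
    rw [Real.norm_eq_abs, abs_div, abs_of_pos hc0, abs_pow]
    have hb := inv_cosh_le ((x-t)/4)
    have habs : |(x-t)/4| = |x-t|/4 := by rw [abs_div]; norm_num
    rw [habs] at hb
    have h2 : Real.exp (-(|x-t|/4)) ≤ Real.exp (|t|/4) * Real.exp (-(4⁻¹ * |x|)) := by
      rw [← Real.exp_add]
      apply Real.exp_le_exp.mpr
      have := abs_sub_abs_le_abs_sub x t
      linarith
    calc |x| ^ n / Real.cosh ((x-t)/4) = |x| ^ n * (Real.cosh ((x-t)/4))⁻¹ := div_eq_mul_inv _ _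
      _ ≤ |x| ^ n * (2 * Real.exp (-(|x-t|/4))) :=
          mul_le_mul_of_nonneg_left hb (by positivity)
      _ ≤ |x| ^ n * (2 * (Real.exp (|t|/4) * Real.exp (-(4⁻¹ * |x|)))) := by
          apply mul_le_mul_of_nonneg_left _ (by positivity)
          apply mul_le_mul_of_nonneg_left h2 (by norm_num)
      _ = 2 * Real.exp (|t|/4) * (|x| ^ n * Real.exp (-(4⁻¹ * |x|))) := by ring

lemma expand_int (N : ℕ) (c : ℝ) :
    ∫ u : ℝ, (u + c) ^ N / Real.cosh (u/4)
      = ∑ i ∈ Finset.range (N+1),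
          (N.choose i : ℝ) * c ^ (N - i) * ∫ u : ℝ, u ^ i / Real.cosh (u/4) := by
  have hfun : (fun u : ℝ => (u + c) ^ N / Real.cosh (u/4))
      = fun u => ∑ i ∈ Finset.range (N+1),
          (N.choose i : ℝ) * c ^ (N - i) * (u ^ i / Real.cosh (u/4)) := by
    funext u
    rw [add_pow, Finset.sum_div]
    apply Finset.sum_congr rfl
    intro i _
    ring
  rw [hfun, MeasureTheory.integral_finset_sum]
  · exact Finset.sum_congr rfl fun i _ => MeasureTheory.integral_const_mul _ _
  · exact fun i _ => (integrable_polysech i).const_mul _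

lemma sum_range_two_mul (n : ℕ) (f : ℕ → ℝ) :
    ∑ i ∈ Finset.range (2*n), f i = ∑ m ∈ Finset.range n, (f (2*m) + f (2*m+1)) := by
  induction n with
  | zero => simp
  | succ n ih =>
    rw [Finset.sum_range_succ, ← ih, show 2*(n+1) = 2*n+1+1 by ring,
      Finset.sum_range_succ, Finset.sum_range_succ]
    ring

lemma secCoeff_moment (n : ℕ) :
    secCoeff n = (1/(4*π)) * ∫ u : ℝ, u ^ (2*n) / Real.cosh (u / 4) := secCoeff_eq n

lemma phi_eq (k : ℕ) (t : ℝ) :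
    (fun x : ℝ => Hker t x * x ^ (2*k+1))
      = fun x => (1/(4*π)) * (x ^ (2*k+1) / Real.cosh ((x - t)/4)
          - x ^ (2*k+1) / Real.cosh ((x + t)/4)) := by
  funext x
  unfold Hker
  rw [show (t - x)/4 = -((x - t)/4) by ring, Real.cosh_neg,
    show (t + x)/4 = (x + t)/4 by ring]
  ring

lemma integrable_phi (k : ℕ) (t : ℝ) :
    Integrable (fun x : ℝ => Hker t x * x ^ (2*k+1)) := by
  rw [phi_eq]
  have h2 : Integrable (fun x : ℝ => x ^ (2*k+1) / Real.cosh ((x + t)/4)) := by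
    have := integrable_shift (2*k+1) (-t)
    simpa [sub_neg_eq_add] using this
  exact ((integrable_shift (2*k+1) t).sub h2).const_mul _

lemma integral_Hker (k : ℕ) (t : ℝ) :
    ∫ x in Ioi (0:ℝ), Hker t x * x ^ (2*k+1) = Fpoly k t := by
  set φ := fun x : ℝ => Hker t x * x ^ (2*k+1) with hφdef
  have hφ : Integrable φ := integrable_phi k t
  have heven : ∀ x : ℝ, φ (-x) = φ x := by
    intro x
    simp only [hφdef, Hker]
    rw [Odd.neg_pow (odd_two_mul_add_one k),
      show t - -x = t + x by ring, show t + -x = t - x by ring]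
    ring
  have hIic : ∫ x in Iic (0:ℝ), φ x = ∫ x in Ioi (0:ℝ), φ x := by
    have h := integral_comp_neg_Ioi 0 φ
    simp only [heven, neg_zero] at h
    exact h.symm
  have htot := intervalIntegral.integral_Iic_add_Ioi (b := (0:ℝ)) hφ.integrableOn hφ.integrableOn
  -- compute full-line integral
  have hfull : ∫ x : ℝ, φ x = 2 * Fpoly k t := by
    rw [hφdef, phi_eq, MeasureTheory.integral_const_mul,
      MeasureTheory.integral_sub (integrable_shift (2*k+1) t)
        (by simpa [sub_neg_eq_add] using integrable_shift (2*k+1) (-t))]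
    have shift1 : ∫ x : ℝ, x ^ (2*k+1) / Real.cosh ((x - t)/4)
        = ∫ u : ℝ, (u + t) ^ (2*k+1) / Real.cosh (u/4) := by
      rw [← MeasureTheory.integral_sub_right_eq_self
        (fun u : ℝ => (u + t) ^ (2*k+1) / Real.cosh (u/4)) t]
      congr 1
      funext x
      rw [sub_add_cancel]
    have shift2 : ∫ x : ℝ, x ^ (2*k+1) / Real.cosh ((x + t)/4)
        = ∫ u : ℝ, (u + -t) ^ (2*k+1) / Real.cosh (u/4) := by
      rw [← MeasureTheory.integral_add_right_eq_self
        (fun u : ℝ => (u + -t) ^ (2*k+1) / Real.cosh (u/4)) t]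
      congr 1
      funext x
      rw [show x + t + -t = x by ring]
    rw [shift1, shift2, expand_int, expand_int, ← Finset.sum_sub_distrib]
    have hrange : 2*k+1+1 = 2*(k+1) := by ring
    rw [hrange, sum_range_two_mul]
    have hstep : ∀ m ∈ Finset.range (k+1),
        (((2*k+1).choose (2*m) : ℝ) * t ^ (2*k+1 - 2*m) * ∫ u : ℝ, u ^ (2*m) / Real.cosh (u/4))
          - ((2*k+1).choose (2*m) : ℝ) * (-t) ^ (2*k+1 - 2*m) * (∫ u : ℝ, u ^ (2*m) / Real.cosh (u/4))
          + ((((2*k+1).choose (2*m+1) : ℝ) * t ^ (2*k+1 - (2*m+1)) * ∫ u : ℝ, u ^ (2*m+1) / Real.cosh (u/4))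
          - ((2*k+1).choose (2*m+1) : ℝ) * (-t) ^ (2*k+1 - (2*m+1)) * (∫ u : ℝ, u ^ (2*m+1) / Real.cosh (u/4)))
        = 2 * (((2*k+1).choose (2*m) : ℝ) * t ^ (2*k+1 - 2*m)
            * ∫ u : ℝ, u ^ (2*m) / Real.cosh (u/4)) := by
      intro m hm
      have hm' : m ≤ k := by
        have := Finset.mem_range.mp hm; omega
      have hodd : Odd (2*k+1 - 2*m) := by
        refine ⟨k - m, by omega⟩
      have heven2 : Even (2*k+1 - (2*m+1)) := by
        refine ⟨k - m, by omega⟩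
      rw [hodd.neg_pow, heven2.neg_pow]
      ring
    rw [Finset.sum_congr rfl hstep]
    -- now multiply by 1/(4π) and identify secCoeff
    rw [Finset.mul_sum]
    unfold Fpoly
    rw [Finset.mul_sum, ← Finset.sum_range_reflect]
    apply Finset.sum_congr rfl
    intro m hm
    have hm' : m ≤ k := by have := Finset.mem_range.mp hm; omega
    rw [show k + 1 - 1 - m = k - m by omega]
    have f1 : 2*k+1 - 2*(k-m) = 2*m+1 := by omega
    have f2 : (2*k+1).choose (2*(k-m)) = (2*k+1).choose (2*m+1) := by
      rw [show 2*(k-m) = 2*k+1 - (2*m+1) by omega]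
      exact Nat.choose_symm (by omega)
    rw [f1, f2, secCoeff_moment (k-m)]
    ring
  rw [hfull] at htot
  rw [hIic] at htot
  linarith

lemma half_pow (x y : ℝ) (m : ℕ) :
    ((y + x) ^ (2*m+1) + (y - x) ^ (2*m+1)) / 2
      = ∑ j ∈ (Finset.range (2*m+2)).filter (fun j => Even j),
          x ^ j * y ^ (2*m+1-j) * ((2*m+1).choose j : ℝ) := by
  have h1 : (y + x) ^ (2*m+1)
      = ∑ j ∈ Finset.range (2*m+2), x^j * y^(2*m+1-j) * ((2*m+1).choose j : ℝ) := by
    rw [show y + x = x + y by ring, add_pow, show 2*m+1+1 = 2*m+2 by omega]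
  have h2 : (y - x) ^ (2*m+1)
      = ∑ j ∈ Finset.range (2*m+2), (-x)^j * y^(2*m+1-j) * ((2*m+1).choose j : ℝ) := by
    rw [show y - x = (-x) + y by ring, add_pow, show 2*m+1+1 = 2*m+2 by omega]
  rw [h1, h2, ← Finset.sum_add_distrib, Finset.sum_filter, Finset.sum_div]
  apply Finset.sum_congr rfl
  intro j _
  rcases Nat.even_or_odd j with hj | hj
  · rw [if_pos hj, hj.neg_pow]; ring
  · rw [if_neg (Nat.not_even_iff_odd.mpr hj), hj.neg_pow]; ring

/-- `∫₀^∞ R(L₁,L₂,x) x^{2k+1} dx = (1/2)F_{2k+1}(L₁+L₂) + (1/2)F_{2k+1}(L₁−L₂)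
  = (2k+1)! Σ_{m=0}^{k} Σ_{i+j=2m+1, j even} (L₁^i L₂^j/(i! j!)) a_{k−m}/((2k−2m)!)`. -/
theorem stmt17 (k : ℕ) (L₁ L₂ : ℝ) :
    (∫ x in Set.Ioi (0 : ℝ), Rker L₁ L₂ x * x ^ (2 * k + 1)) =
      (1 / 2) * Fpoly k (L₁ + L₂) + (1 / 2) * Fpoly k (L₁ - L₂) ∧
    (1 / 2) * Fpoly k (L₁ + L₂) + (1 / 2) * Fpoly k (L₁ - L₂) =
      (Nat.factorial (2 * k + 1) : ℝ) *
        ∑ m ∈ Finset.range (k + 1),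
          ∑ j ∈ (Finset.range (2 * m + 2)).filter (fun j => Even j),
            L₁ ^ (2 * m + 1 - j) * L₂ ^ j /
                ((Nat.factorial (2 * m + 1 - j) : ℝ) * (Nat.factorial j : ℝ)) *
              (secCoeff (k - m) / (Nat.factorial (2 * k - 2 * m) : ℝ)) := by
  constructor
  · have hre : (fun x : ℝ => Rker L₁ L₂ x * x^(2*k+1))
        = fun x => (1/2) * (Hker (L₁+L₂) x * x^(2*k+1))
            + (1/2) * (Hker (L₁-L₂) x * x^(2*k+1)) := by
      funext x; unfold Rker; ring
    rw [hre, MeasureTheory.integral_add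
        (((integrable_phi k (L₁+L₂)).integrableOn).const_mul _)
        (((integrable_phi k (L₁-L₂)).integrableOn).const_mul _),
      MeasureTheory.integral_const_mul, MeasureTheory.integral_const_mul,
      integral_Hker k (L₁+L₂), integral_Hker k (L₁-L₂)]
  · unfold Fpoly
    rw [Finset.mul_sum, Finset.mul_sum, Finset.mul_sum, ← Finset.sum_add_distrib]
    apply Finset.sum_congr rfl
    intro m hm
    have hm' : m ≤ k := by have := Finset.mem_range.mp hm; omega
    rw [show (1:ℝ)/2 * ((L₁+L₂)^(2*m+1) * ((2*k+1).choose (2*m+1) : ℝ) * secCoeff (k-m))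
          + 1/2 * ((L₁-L₂)^(2*m+1) * ((2*k+1).choose (2*m+1) : ℝ) * secCoeff (k-m))
        = (((L₁+L₂)^(2*m+1) + (L₁-L₂)^(2*m+1))/2)
            * (((2*k+1).choose (2*m+1) : ℝ) * secCoeff (k-m)) by ring,
      half_pow L₂ L₁ m, Finset.sum_mul, Finset.mul_sum]
    apply Finset.sum_congr rfl
    intro j hj
    obtain ⟨hjr, hje⟩ := Finset.mem_filter.mp hj
    have hj1 : j ≤ 2*m+1 := by have := Finset.mem_range.mp hjr; omega
    have hj2 : 2*m+1 ≤ 2*k+1 := by omega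
    have c1 : ((2*m+1).choose j : ℝ)
        = ((2*m+1).factorial : ℝ) / ((j.factorial : ℝ) * ((2*m+1-j).factorial : ℝ)) := by
      rw [eq_div_iff (by positivity)]
      have := Nat.choose_mul_factorial_mul_factorial hj1
      push_cast [← this]
      ring
    have c2 : ((2*k+1).choose (2*m+1) : ℝ)
        = ((2*k+1).factorial : ℝ)
            / (((2*m+1).factorial : ℝ) * ((2*k-2*m).factorial : ℝ)) := by
      rw [eq_div_iff (by positivity)]
      have h := Nat.choose_mul_factorial_mul_factorial hj2
      rw [show 2*k+1 - (2*m+1) = 2*k-2*m by omega] at h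
      push_cast [← h]
      ring
    rw [c1, c2]
    have p1 : ((j.factorial : ℝ)) ≠ 0 := by positivity
    have p2 : (((2*m+1-j).factorial : ℝ)) ≠ 0 := by positivity
    have p3 : (((2*m+1).factorial : ℝ)) ≠ 0 := by positivity
    have p4 : (((2*k-2*m).factorial : ℝ)) ≠ 0 := by positivity
    field_simp
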